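/- Let G be a finite simple graph admitting a proper vertex colouring with k colours. Then G admits an orientation in which every directed path has at most k vertices; that is, there is no sequence of k+1 distinct vertices v_0, v_1, …, v_k with r(v_i, v_{i+1}) for all 0 ≤ i < k. -/

import Mathlib

/-- If a finite simple graph `G` has a proper vertex colouring with `k` colours, then `G`
admits an orientation in which every directed path has at most `k` vertices. -/
theorem orientation_no_long_directed_path {V : Type} [Fintype V] (G : SimpleGraph V)
    (k : ℕ) (c : V → Fin k) (hc : ∀ u v, G.Adj u v → c u ≠ c v) :
    ∃ r : V → V → Prop,
      (∀ v, ¬ r v v) ∧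
      (∀ u v, (r u v ∨ r v u) ↔ G.Adj u v) ∧
      (∀ u v, ¬ (r u v ∧ r v u)) ∧
      ¬ ∃ p : Fin (k + 1) → V, Function.Injective p ∧
          ∀ i : Fin k, r (p i.castSucc) (p i.succ) := by
  refine ⟨fun u v => G.Adj u v ∧ c u < c v, ?_, ?_, ?_, ?_⟩
  · intro v ⟨h, _⟩; exact G.loopless.irrefl v h
  · intro u v
    constructor
    · rintro (⟨h, _⟩ | ⟨h, _⟩)
      · exact h
      · exact h.symm
    · intro h
      rcases lt_or_gt_of_ne (hc u v h) with hlt | hgt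
      · exact Or.inl ⟨h, hlt⟩
      · exact Or.inr ⟨h.symm, hgt⟩
  · rintro u v ⟨⟨_, h1⟩, ⟨_, h2⟩⟩; exact absurd h2 h1.asymm
  · rintro ⟨p, hp, hr⟩
    have hmono : StrictMono (fun i : Fin (k + 1) => c (p i)) := by
      rw [Fin.strictMono_iff_lt_succ]
      intro i; exact (hr i).2
    have := Fintype.card_le_of_injective _ hmono.injective
    simp at this
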